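/- For all real x with 0 ≤ x ≤ 2, sin(x) ≥ x·e^{−x²/3}. -/

import Mathlib

open Real

lemma sin_ge_sub_cube' {x : ℝ} (hx : 0 ≤ x) : x - x ^ 3 / 6 ≤ Real.sin x := by
  have key : MonotoneOn (fun y : ℝ => Real.sin y - (y - y ^ 3 / 6)) (Set.Ici 0) := by
    apply monotoneOn_of_deriv_nonneg (convex_Ici 0)
    · fun_prop
    · fun_prop
    · intro y hy
      have hd : deriv (fun y : ℝ => Real.sin y - (y - y ^ 3 / 6)) y
          = Real.cos y - (1 - y ^ 2 / 2) := by
        have : HasDerivAt (fun y : ℝ => Real.sin y - (y - y ^ 3 / 6))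
            (Real.cos y - (1 - 3 * y ^ 2 / 6)) y := by
          have h1 : HasDerivAt Real.sin (Real.cos y) y := Real.hasDerivAt_sin y
          have h2 : HasDerivAt (fun y : ℝ => y - y ^ 3 / 6) (1 - 3 * y ^ 2 / 6) y := by
            have := ((hasDerivAt_pow 3 y).div_const 6)
            exact ((hasDerivAt_id' y).sub this).congr_deriv (by norm_num)
          exact h1.sub h2
        rw [this.deriv]; ring
      rw [hd]
      have := Real.one_sub_sq_div_two_le_cos (x := y)
      linarith
  have h0 : (fun y : ℝ => Real.sin y - (y - y ^ 3 / 6)) 0 = 0 := by simp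
  have := key (Set.self_mem_Ici) (Set.mem_Ici.mpr hx) hx
  rw [h0] at this
  linarith [this]

lemma exp_neg_bound {t : ℝ} (ht : 0 ≤ t) (ht' : t ≤ 4 / 3) :
    Real.exp (-t) ≤ 1 - t / 2 := by
  have hP : 1 + t + t ^ 2 / 2 + t ^ 3 / 6 + t ^ 4 / 24 ≤ Real.exp t := by
    have := Real.sum_le_exp_of_nonneg ht 5
    simp [Finset.sum_range_succ, Nat.factorial] at this
    linarith
  have hPpos : (0:ℝ) < 1 + t + t ^ 2 / 2 + t ^ 3 / 6 + t ^ 4 / 24 := by positivity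
  have h1 : Real.exp (-t) ≤ 1 / (1 + t + t ^ 2 / 2 + t ^ 3 / 6 + t ^ 4 / 24) := by
    rw [Real.exp_neg]
    exact one_div_le_one_div_of_le hPpos hP |>.trans_eq' (by rw [inv_eq_one_div])
  refine h1.trans ?_
  rw [div_le_iff₀ hPpos]
  nlinarith [sq_nonneg t, sq_nonneg (t - 1), pow_nonneg ht 3, pow_nonneg ht 4, pow_nonneg ht 5]

theorem sin_ge (x : ℝ) (h0 : 0 ≤ x) (h2 : x ≤ 2) :
    x * Real.exp (-x ^ 2 / 3) ≤ Real.sin x := by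
  have ht : 0 ≤ x ^ 2 / 3 := by positivity
  have ht' : x ^ 2 / 3 ≤ 4 / 3 := by nlinarith
  have he : Real.exp (-x ^ 2 / 3) ≤ 1 - x ^ 2 / 6 := by
    have := exp_neg_bound ht ht'
    rw [neg_div] at *
    linarith
  have h1 : x * Real.exp (-x ^ 2 / 3) ≤ x * (1 - x ^ 2 / 6) :=
    mul_le_mul_of_nonneg_left he h0
  have h2' := sin_ge_sub_cube' h0
  nlinarith
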